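/- Let R be a commutative ring, M an R-module, and B : M →ₗ[R] M →ₗ[R] R a perfect bilinear form that is skew-symmetric, i.e., B y x = -B x y for all x, y ∈ M. Suppose F and G are complementary isotropic submodules of M. Then there exists a linear equivalence u : M ≃ₗ[R] F × Module.Dual R F such that (i) u maps F onto F × {0} and G onto {0} × Module.Dual R F, and (ii) for all m, m' ∈ M one has B m m' = (u m').2 ((u m).1) - (u m).2 ((u m').1). In other words, (M, B) with the pair of Lagrangians (F, G) is isomorphic to the hyperbolic (-1)-symmetric form on F with its standard pair of Lagrangians (F, F*). -/

import Mathlib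

/-- A perfect skew-symmetric form with complementary isotropic
submodules `F`, `G` is isomorphic to the hyperbolic `(-1)`-symmetric form on `F`
with its standard pair of Lagrangians. -/
theorem stmt1 {R M : Type*} [CommRing R] [AddCommGroup M] [Module R M]
    (B : M →ₗ[R] M →ₗ[R] R)
    (hB : Function.Bijective fun x : M => (B x : Module.Dual R M))
    (hskew : ∀ x y : M, B y x = - B x y)
    (F G : Submodule R M)
    (hF : ∀ x ∈ F, ∀ y ∈ F, B x y = 0)
    (hG : ∀ x ∈ G, ∀ y ∈ G, B x y = 0)
    (hFG : IsCompl F G) :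
    ∃ u : M ≃ₗ[R] F × Module.Dual R F,
      Submodule.map (u : M →ₗ[R] F × Module.Dual R F) F
        = Submodule.fst R F (Module.Dual R F) ∧
      Submodule.map (u : M →ₗ[R] F × Module.Dual R F) G
        = Submodule.snd R F (Module.Dual R F) ∧
      ∀ m m' : M, B m m' = (u m').2 ((u m).1) - (u m).2 ((u m').1) := by
  classical
  set π : M →ₗ[R] F := F.projectionOnto G hFG with hπ
  set L : M →ₗ[R] F × Module.Dual R F :=
    π.prod (F.subtype.dualMap ∘ₗ B.flip) with hL
  have hL1 : ∀ m : M, (L m).1 = π m := fun m => rfl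
  have hL2 : ∀ (m : M) (f : F), (L m).2 f = B f m := fun m f => rfl
  -- every element decomposes
  have hdec : ∀ m : M, (m : M) - (π m : M) ∈ G := by
    intro m
    rw [← Submodule.projectionOnto_apply_eq_zero_iff (p := F) hFG]
    simp [map_sub, hπ, Submodule.projectionOnto_apply_left hFG (π m), -Submodule.coe_projectionOnto_apply]
  -- injectivity
  have hinj : Function.Injective L := by
    intro m m' h
    have h' : L (m - m') = 0 := by rw [map_sub, h, sub_self]
    set n := m - m' with hn
    have h1 : π n = 0 := congrArg Prod.fst h'
    have hnG : n ∈ G := (Submodule.projectionOnto_apply_eq_zero_iff hFG).1 h1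
    have h2 : ∀ f : F, B (f : M) n = 0 := by
      intro f
      have := congrArg Prod.snd h'
      calc B (f : M) n = (L n).2 f := rfl
        _ = 0 := by rw [this]; rfl
    have hall : ∀ x : M, B x n = 0 := by
      intro x
      obtain ⟨f, g, hf, hg, rfl⟩ := Submodule.codisjoint_iff_exists_add_eq.mp hFG.codisjoint x
      rw [map_add, LinearMap.add_apply, h2 ⟨f, hf⟩, hG g hg n hnG, add_zero]
    have hBn : B n = 0 := by
      ext x
      show B n x = 0
      rw [hskew x n, hall x, neg_zero]
    have : n = 0 := hB.injective (by simpa using hBn)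
    exact sub_eq_zero.mp this
  -- surjectivity
  have hsurj : Function.Surjective L := by
    rintro ⟨f, φ⟩
    obtain ⟨m₀, hm₀⟩ := hB.surjective (-(φ ∘ₗ π))
    have hm₀2 : B m₀ = -(φ ∘ₗ π) := hm₀
    have hm₀' : ∀ f' : F, B (f' : M) m₀ = φ f' := by
      intro f'
      have h1 := LinearMap.congr_fun hm₀2 (f' : M)
      have h2 : B m₀ (f' : M) = -(φ (π (f' : M))) := by simpa using h1
      rw [hskew, h2, neg_neg, hπ, Submodule.projectionOnto_apply_left hFG f']
    refine ⟨m₀ + ((f : M) - (π m₀ : M)), ?_⟩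
    have hFmem : (f : M) - (π m₀ : M) ∈ F := F.sub_mem f.2 (π m₀).2
    have happ : π ((f : M) - (π m₀ : M)) = ⟨(f : M) - (π m₀ : M), hFmem⟩ :=
      Submodule.projectionOnto_apply_left hFG ⟨_, hFmem⟩
    have hfst : π (m₀ + ((f : M) - (π m₀ : M))) = f := by
      apply Subtype.ext
      rw [map_add, happ]
      push_cast
      abel
    refine Prod.ext ?_ ?_
    · exact hfst
    · refine LinearMap.ext fun f' => ?_
      show B (f' : M) (m₀ + ((f : M) - (π m₀ : M))) = φ f'
      rw [map_add, hm₀' f', hF f' f'.2 _ hFmem, add_zero]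
  set u := LinearEquiv.ofBijective L ⟨hinj, hsurj⟩ with hu
  refine ⟨u, ?_, ?_, ?_⟩
  · -- image of F
    apply le_antisymm
    · rintro _ ⟨x, hx, rfl⟩
      show (L x).2 ∈ (⊥ : Submodule R (Module.Dual R F))
      rw [Submodule.mem_bot]
      refine LinearMap.ext fun f' => ?_
      show B (f' : M) x = 0
      exact hF f' f'.2 x hx
    · rintro ⟨f, φ⟩ hmem
      have hφ : φ = 0 := by simpa [Submodule.fst] using hmem
      refine ⟨(f : M), f.2, ?_⟩
      show L (f : M) = (f, φ)
      refine Prod.ext ?_ ?_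
      · exact Submodule.projectionOnto_apply_left hFG f
      · refine LinearMap.ext fun f' => ?_
        show B (f' : M) (f : M) = φ f'
        rw [hF f' f'.2 f f.2, hφ]; rfl
  · -- image of G
    apply le_antisymm
    · rintro _ ⟨g, hg, rfl⟩
      show (L g).1 ∈ (⊥ : Submodule R F)
      rw [Submodule.mem_bot, hL1]
      exact Submodule.projectionOnto_apply_of_mem_right hFG hg
    · rintro ⟨f, φ⟩ hmem
      have hf : f = 0 := by simpa [Submodule.snd] using hmem
      obtain ⟨m, hm⟩ := hsurj (f, φ)
      refine ⟨m, ?_, hm⟩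
      have : π m = 0 := by rw [← hL1 m, hm]; exact hf
      exact (Submodule.projectionOnto_apply_eq_zero_iff hFG).1 this
  · -- the form
    intro m m'
    have key1 : ∀ a b : M, B a b = B (π a : M) b + B (a - (π a : M)) b := by
      intro a b
      have h : (π a : M) + (a - (π a : M)) = a := by abel
      rw [← LinearMap.add_apply, ← map_add, h]
    have key2 : ∀ a b : M, B a b = B a (π b : M) + B a (b - (π b : M)) := by
      intro a b
      have h : (π b : M) + (b - (π b : M)) = b := by abel
      conv_lhs => rw [← h]
      rw [map_add]
    show B m m' = B (π m : M) m' - B (π m' : M) m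
    rw [key1 m m', key2 (m - (π m : M)) m', hG _ (hdec m) _ (hdec m'), add_zero,
      key2 (π m' : M) m, hF (π m') (π m').2 (π m) (π m).2, zero_add,
      hskew (π m' : M) (m - (π m : M))]
    ring
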